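/- arXiv:2604.24571 — 3 statements merged into one kernel-verified Lean document; each statement's English description precedes it below -/
import Mathlib

section
/- Let T be a spanning tree of G, let L be a set of leaves of T, each of degree at least 2 in G, and for each v ∈ L let q(v) be a G-neighbor of v distinct from its T-parent p(v), with q(v) ∉ L for all v ∈ L. Let A, B ⊆ L be disjoint. Define T_A from T by replacing edge v·p(v) with v·q(v) for every v ∈ A, and T_B analogously. Then T_A and T_B are spanning trees of G and |E(T_A) △ E(T_B)| = 2(|A| + |B|). -/
open SimpleGraph

section SwapAux

variable {V : Type*}

private lemma swap_first_edge {G : SimpleGraph V} {a b : V} (w : G.Walk a b) (hab : a ≠ b) :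
    ∃ z, G.Adj a z ∧ s(a, z) ∈ w.edges := by
  cases w with
  | nil => exact absurd rfl hab
  | cons h w' => exact ⟨_, h, by simp⟩

private lemma swap_closed {T : SimpleGraph V} (C : Set V)
    (hC : ∀ x ∈ C, ∀ y, T.Adj x y → y ∈ C) {a b : V} (ha : a ∈ C) (w : T.Walk a b) :
    b ∈ C := by
  induction w with
  | nil => exact ha
  | cons h _ ih => exact ih (hC _ ha _ h)

private lemma swap_leaf_not_mem_support [DecidableEq V] {T : SimpleGraph V} {v pv x y : V}
    (hnb : T.neighborSet v = {pv}) {P : T.Walk x y} (hP : P.IsPath)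
    (hx : x ≠ v) (hy : y ≠ v) : v ∉ P.support := by
  intro hv
  obtain ⟨z₁, hz₁, hz₁e⟩ := swap_first_edge (P.takeUntil v hv).reverse (Ne.symm hx)
  obtain ⟨z₂, hz₂, hz₂e⟩ := swap_first_edge (P.dropUntil v hv) (Ne.symm hy)
  have hz₁' : z₁ = pv := by
    have h : z₁ ∈ T.neighborSet v := hz₁
    rw [hnb] at h; exact h
  have hz₂' : z₂ = pv := by
    have h : z₂ ∈ T.neighborSet v := hz₂
    rw [hnb] at h; exact h
  rw [Walk.edges_reverse, List.mem_reverse] at hz₁e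
  have hnd : ((P.takeUntil v hv).append (P.dropUntil v hv)).edges.Nodup := by
    rw [P.take_spec hv]; exact hP.edges_nodup
  rw [Walk.edges_append, List.nodup_append] at hnd
  subst hz₁' hz₂'
  exact hnd.2.2 _ hz₁e _ hz₂e rfl

set_option maxHeartbeats 1000000 in
private lemma swap_symmdiff_prop (PE PdA PnA PdB PnB : Prop)
    (h1 : PdA → PE) (h2 : PdB → PE) (h3 : PnA → ¬PE) (h4 : PnB → ¬PE)
    (h5 : PdA → ¬PdB) (h6 : PnA → ¬PnB) (h7 : PdA → ¬PnB) (h8 : PdB → ¬PnA) :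
    ((((PE ∧ ¬PdA) ∨ PnA) ∧ ¬(((PE ∧ ¬PdB) ∨ PnB))) ∨
      (((PE ∧ ¬PdB) ∨ PnB) ∧ ¬(((PE ∧ ¬PdA) ∨ PnA))))
      ↔ ((PdA ∨ PdB) ∨ (PnA ∨ PnB)) := by
  tauto

end SwapAux

/-- The tree obtained from `T` by replacing, for each `v ∈ S`, the edge `v (p v)` by
the edge `v (q v)`. -/
def swapTree {V : Type*} (T : SimpleGraph V) (p q : V → V) (S : Finset V) :
    SimpleGraph V :=
  SimpleGraph.fromEdgeSet
    ((T.edgeSet \ {e | ∃ v ∈ S, e = s(v, p v)}) ∪ {e | ∃ v ∈ S, e = s(v, q v)})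

/-- Swapping leaf edges on disjoint sets A, B of leaves yields two spanning trees whose
edge symmetric difference has cardinality exactly 2(|A| + |B|). -/
theorem stmt6 {V : Type*} [Fintype V] (G T : SimpleGraph V)
    (hG : G.Connected) (hsub : T ≤ G) (hT : T.IsTree)
    (L : Finset V) (p q : V → V)
    (hleaf : ∀ v ∈ L, T.neighborSet v = {p v})
    (hdeg : ∀ v ∈ L, 2 ≤ (G.neighborSet v).ncard)
    (hq : ∀ v ∈ L, G.Adj v (q v) ∧ q v ≠ p v ∧ q v ∉ L)
    (A B : Finset V) (hA : A ⊆ L) (hB : B ⊆ L) (hAB : Disjoint A B) :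
    (swapTree T p q A ≤ G ∧ (swapTree T p q A).IsTree) ∧
      (swapTree T p q B ≤ G ∧ (swapTree T p q B).IsTree) ∧
      (symmDiff (swapTree T p q A).edgeSet (swapTree T p q B).edgeSet).ncard
        = 2 * (A.card + B.card) := by
  classical
  -- basic facts
  have hadj : ∀ v ∈ L, T.Adj v (p v) := by
    intro v hv
    have h : p v ∈ T.neighborSet v := by rw [hleaf v hv]; rfl
    exact h
  have hpL : ∀ v ∈ L, p v ∉ L := by
    intro v hv hpv
    have hppv : v = p (p v) := by
      have h : v ∈ T.neighborSet (p v) := (hadj v hv).symm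
      rw [hleaf _ hpv] at h; exact h
    have huniv : ∀ u : V, u ∈ ({v, p v} : Set V) := by
      intro u
      obtain ⟨w⟩ := hT.isConnected v u
      refine swap_closed ({v, p v} : Set V) ?_ (by left; rfl) w
      rintro x (rfl | rfl) y hy
      · have h : y ∈ T.neighborSet x := hy
        rw [hleaf x hv] at h
        exact Or.inr h
      · have h : y ∈ T.neighborSet (p v) := hy
        rw [hleaf _ hpv] at h
        exact Or.inl (by rw [h, ← hppv])
    have hsub1 : G.neighborSet v ⊆ {p v} := by
      intro u hu
      have hne : u ≠ v := (hu : G.Adj v u).ne'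
      rcases huniv u with h | h
      · exact absurd h hne
      · exact h
    have := Set.ncard_le_ncard hsub1 (Set.toFinite _)
    rw [Set.ncard_singleton] at this
    exact absurd (le_trans (hdeg v hv) this) (by norm_num)
  have hqvne : ∀ v ∈ L, q v ≠ v := fun v hv => ((hq v hv).1).ne'
  have hNtE : ∀ v ∈ L, s(v, q v) ∉ T.edgeSet := by
    intro v hv h
    have h' : q v ∈ T.neighborSet v := (SimpleGraph.mem_edgeSet _).mp h
    rw [hleaf v hv] at h'
    exact (hq v hv).2.1 h'
  have hDinj : ∀ u ∈ L, ∀ v ∈ L, s(u, p u) = s(v, p v) → u = v := by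
    intro u hu v hv h
    rw [Sym2.eq_iff] at h
    rcases h with ⟨h1, -⟩ | ⟨h1, -⟩
    · exact h1
    · exact absurd (h1 ▸ hu) (hpL v hv)
  have hNinj : ∀ u ∈ L, ∀ v ∈ L, s(u, q u) = s(v, q v) → u = v := by
    intro u hu v hv h
    rw [Sym2.eq_iff] at h
    rcases h with ⟨h1, -⟩ | ⟨h1, -⟩
    · exact h1
    · exact absurd (h1 ▸ hu) (hq v hv).2.2
  have hDN : ∀ u ∈ L, ∀ v ∈ L, s(u, p u) ≠ s(v, q v) := by
    intro u hu v hv h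
    rw [Sym2.eq_iff] at h
    rcases h with ⟨h1, h2⟩ | ⟨h1, -⟩
    · subst h1
      exact (hq u hu).2.1 h2.symm
    · exact (hq v hv).2.2 (h1 ▸ hu)
  -- edge set of the swapped graph
  have edgeSet_eq : ∀ S : Finset V, S ⊆ L →
      (swapTree T p q S).edgeSet
        = (T.edgeSet \ {e | ∃ v ∈ S, e = s(v, p v)}) ∪ {e | ∃ v ∈ S, e = s(v, q v)} := by
    intro S hS
    show (SimpleGraph.fromEdgeSet _).edgeSet = _
    rw [SimpleGraph.edgeSet_fromEdgeSet, sdiff_eq_left]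
    rw [Set.disjoint_left]
    intro e he hd
    rcases he with ⟨he, -⟩ | he
    · exact T.not_isDiag_of_mem_edgeSet he hd
    · obtain ⟨v, hv, rfl⟩ := he
      simp only [Sym2.mem_diagSet, Set.mem_setOf_eq, Sym2.mk_isDiag_iff] at hd
      exact hqvne v (hS hv) hd.symm
  -- the swapped graph is a subgraph of G
  have hle : ∀ S : Finset V, S ⊆ L → swapTree T p q S ≤ G := by
    intro S hS a b hab
    rw [← SimpleGraph.mem_edgeSet, edgeSet_eq S hS] at hab
    rcases hab with ⟨he, -⟩ | he
    · exact hsub ((SimpleGraph.mem_edgeSet _).mp he)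
    · obtain ⟨v, hv, he⟩ := he
      rw [Sym2.eq_iff] at he
      rcases he with ⟨h1, h2⟩ | ⟨h1, h2⟩
      · rw [h1, h2]; exact (hq v (hS hv)).1
      · rw [h1, h2]; exact (hq v (hS hv)).1.symm
  -- vertices in S have unique neighbor q in the swapped graph
  have hNbS : ∀ S : Finset V, S ⊆ L → ∀ w ∈ S, ∀ z, (swapTree T p q S).Adj w z → z = q w := by
    intro S hS w hw z h
    rw [← SimpleGraph.mem_edgeSet, edgeSet_eq S hS] at h
    rcases h with ⟨he, hnd⟩ | he
    · have h' : z ∈ T.neighborSet w := (SimpleGraph.mem_edgeSet _).mp he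
      rw [hleaf w (hS hw)] at h'
      exact absurd ⟨w, hw, by rw [h']⟩ hnd
    · obtain ⟨v, hv, he⟩ := he
      rw [Sym2.eq_iff] at he
      rcases he with ⟨h1, h2⟩ | ⟨h1, h2⟩
      · rw [h2, h1]
      · exact absurd (h1 ▸ hS hw) (hq v (hS hv)).2.2
  -- connectivity
  have hconn : ∀ S : Finset V, S ⊆ L → (swapTree T p q S).Connected := by
    intro S hS
    have hTc := hT.isConnected
    haveI : Nonempty V := hTc.nonempty
    rw [SimpleGraph.connected_iff]
    refine ⟨?_, inferInstance⟩
    have main : ∀ x, x ∉ S → ∀ y, y ∉ S → (swapTree T p q S).Reachable x y := by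
      intro x hx y hy
      obtain ⟨w⟩ := hTc x y
      have hedge : ∀ e ∈ (w.toPath : T.Walk x y).edges, e ∈ (swapTree T p q S).edgeSet := by
        intro e he
        rw [edgeSet_eq S hS]
        left
        refine ⟨(w.toPath : T.Walk x y).edges_subset_edgeSet he, ?_⟩
        rintro ⟨v, hv, rfl⟩
        have hsup : v ∉ (w.toPath : T.Walk x y).support :=
          swap_leaf_not_mem_support (hleaf v (hS hv)) w.toPath.2
            (fun h => hx (by rw [h]; exact hv)) (fun h => hy (by rw [h]; exact hv))
        exact hsup (Walk.fst_mem_support_of_mem_edges _ he)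
      exact ⟨(w.toPath : T.Walk x y).transfer _ hedge⟩
    have step : ∀ x, ∃ x', x' ∉ S ∧ (swapTree T p q S).Reachable x x' := by
      intro x
      by_cases hx : x ∈ S
      · refine ⟨q x, fun h => (hq x (hS hx)).2.2 (hS h), ?_⟩
        have h : (swapTree T p q S).Adj x (q x) := by
          rw [← SimpleGraph.mem_edgeSet, edgeSet_eq S hS]
          exact Or.inr ⟨x, hx, rfl⟩
        exact h.reachable
      · exact ⟨x, hx, SimpleGraph.Reachable.refl x⟩
    intro x y
    obtain ⟨x', hx', rx⟩ := step x
    obtain ⟨y', hy', ry⟩ := step y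
    exact rx.trans ((main x' hx' y' hy').trans ry.symm)
  -- acyclicity
  have hacyc : ∀ S : Finset V, S ⊆ L → (swapTree T p q S).IsAcyclic := by
    intro S hS u c hc
    by_cases hsup : ∃ w ∈ S, w ∈ c.support
    · obtain ⟨w, hw, hws⟩ := hsup
      have hc' := hc.rotate hws
      have hnn : ¬ (c.rotate w hws).Nil := hc'.not_nil
      rw [Walk.not_nil_iff] at hnn
      obtain ⟨x, hadjwx, qw, hqweq⟩ := hnn
      rw [hqweq, Walk.cons_isCycle_iff] at hc'
      obtain ⟨z, hz, hze⟩ := swap_first_edge qw.reverse hadjwx.ne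
      have hzq : z = q w := hNbS S hS w hw z hz
      have hxq : x = q w := hNbS S hS w hw x hadjwx
      rw [Walk.edges_reverse, List.mem_reverse] at hze
      rw [hzq, ← hxq] at hze
      exact hc'.2 hze
    · push_neg at hsup
      have hedges : ∀ e ∈ c.edges, e ∈ T.edgeSet := by
        intro e he
        have h := c.edges_subset_edgeSet he
        rw [edgeSet_eq S hS] at h
        rcases h with ⟨h1, -⟩ | h1
        · exact h1
        · obtain ⟨v, hv, rfl⟩ := h1
          exact absurd (Walk.fst_mem_support_of_mem_edges _ he) (hsup v hv)
      exact hT.2 (c.transfer T hedges) (hc.transfer hedges)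
  have htree : ∀ S : Finset V, S ⊆ L → (swapTree T p q S).IsTree :=
    fun S hS => ⟨hconn S hS, hacyc S hS⟩
  refine ⟨⟨hle A hA, htree A hA⟩, ⟨hle B hB, htree B hB⟩, ?_⟩
  -- the symmetric difference
  set dA : Set (Sym2 V) := {e | ∃ v ∈ A, e = s(v, p v)} with hdA
  set nA : Set (Sym2 V) := {e | ∃ v ∈ A, e = s(v, q v)} with hnA
  set dB : Set (Sym2 V) := {e | ∃ v ∈ B, e = s(v, p v)} with hdB
  set nB : Set (Sym2 V) := {e | ∃ v ∈ B, e = s(v, q v)} with hnB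
  have hsymm : symmDiff (swapTree T p q A).edgeSet (swapTree T p q B).edgeSet
      = (dA ∪ dB) ∪ (nA ∪ nB) := by
    rw [edgeSet_eq A hA, edgeSet_eq B hB]
    ext e
    rw [Set.mem_symmDiff]
    simp only [Set.mem_union, Set.mem_diff]
    refine swap_symmdiff_prop _ _ _ _ _ ?_ ?_ ?_ ?_ ?_ ?_ ?_ ?_
    · rintro ⟨v, hv, rfl⟩; exact (SimpleGraph.mem_edgeSet _).mpr (hadj v (hA hv))
    · rintro ⟨v, hv, rfl⟩; exact (SimpleGraph.mem_edgeSet _).mpr (hadj v (hB hv))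
    · rintro ⟨v, hv, rfl⟩; exact hNtE v (hA hv)
    · rintro ⟨v, hv, rfl⟩; exact hNtE v (hB hv)
    · rintro ⟨v, hv, rfl⟩ ⟨u, hu, he⟩
      have := hDinj u (hB hu) v (hA hv) he.symm
      exact Finset.disjoint_left.mp hAB hv (this ▸ hu)
    · rintro ⟨v, hv, rfl⟩ ⟨u, hu, he⟩
      have := hNinj u (hB hu) v (hA hv) he.symm
      exact Finset.disjoint_left.mp hAB hv (this ▸ hu)
    · rintro ⟨v, hv, rfl⟩ ⟨u, hu, he⟩
      exact hDN v (hA hv) u (hB hu) he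
    · rintro ⟨v, hv, rfl⟩ ⟨u, hu, he⟩
      exact hDN v (hB hv) u (hA hu) he
  have cardD : ∀ S : Finset V, S ⊆ L →
      ({e : Sym2 V | ∃ v ∈ S, e = s(v, p v)}).ncard = S.card := by
    intro S hS
    have himg : {e : Sym2 V | ∃ v ∈ S, e = s(v, p v)} = (fun v => s(v, p v)) '' ↑S := by
      ext e
      simp only [Set.mem_setOf_eq, Set.mem_image, Finset.mem_coe]
      exact exists_congr fun v => and_congr_right fun _ => eq_comm
    rw [himg]
    rw [Set.ncard_image_of_injOn]
    · exact Set.ncard_coe_finset S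
    · intro u hu v hv h
      exact hDinj u (hS hu) v (hS hv) h
  have cardN : ∀ S : Finset V, S ⊆ L →
      ({e : Sym2 V | ∃ v ∈ S, e = s(v, q v)}).ncard = S.card := by
    intro S hS
    have himg : {e : Sym2 V | ∃ v ∈ S, e = s(v, q v)} = (fun v => s(v, q v)) '' ↑S := by
      ext e
      simp only [Set.mem_setOf_eq, Set.mem_image, Finset.mem_coe]
      exact exists_congr fun v => and_congr_right fun _ => eq_comm
    rw [himg]
    rw [Set.ncard_image_of_injOn]
    · exact Set.ncard_coe_finset S
    · intro u hu v hv h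
      exact hNinj u (hS hu) v (hS hv) h
  have hdisj1 : Disjoint dA dB := by
    rw [Set.disjoint_left]
    rintro e ⟨v, hv, rfl⟩ ⟨u, hu, he⟩
    have := hDinj u (hB hu) v (hA hv) he.symm
    exact Finset.disjoint_left.mp hAB hv (this ▸ hu)
  have hdisj2 : Disjoint nA nB := by
    rw [Set.disjoint_left]
    rintro e ⟨v, hv, rfl⟩ ⟨u, hu, he⟩
    have := hNinj u (hB hu) v (hA hv) he.symm
    exact Finset.disjoint_left.mp hAB hv (this ▸ hu)
  have hdisj3 : Disjoint (dA ∪ dB) (nA ∪ nB) := by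
    rw [Set.disjoint_left]
    rintro e (⟨v, hv, rfl⟩ | ⟨v, hv, rfl⟩) (⟨u, hu, he⟩ | ⟨u, hu, he⟩)
    · exact hDN v (hA hv) u (hA hu) he
    · exact hDN v (hA hv) u (hB hu) he
    · exact hDN v (hB hv) u (hA hu) he
    · exact hDN v (hB hv) u (hB hu) he
  rw [hsymm, Set.ncard_union_eq hdisj3 (Set.toFinite _) (Set.toFinite _),
    Set.ncard_union_eq hdisj1 (Set.toFinite _) (Set.toFinite _),
    Set.ncard_union_eq hdisj2 (Set.toFinite _) (Set.toFinite _),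
    cardD A hA, cardD B hB, cardN A hA, cardN B hB]
  ring
end

section
/- Let G be a connected graph with spanning tree T. Suppose T has a set L of leaves with |L| ≥ 2⌈k/4⌉ℓ such that every vertex of L has degree at least 2 in G. Then G has ℓ spanning trees T_1, ..., T_ℓ such that |E(T_i) △ E(T_j)| ≥ k for all i ≠ j. -/
open SimpleGraph Finset Function

section stmt9aux

variable {V : Type*}

/-- Breaker-set lemma for functional graphs: one can choose a set `B` of
"breakers" (one per cycle) such that every forward orbit leaves `S ∖ B`,
and every breaker has a predecessor in `S ∖ B`. -/
lemma stmt9.lemA [DecidableEq V] (c : V → V) :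
    ∀ S : Finset V, (∀ v ∈ S, c v ≠ v) → ∃ B : Finset V, B ⊆ S ∧
      (∀ v ∈ S, v ∉ B → ∃ n, c^[n] v ∉ S ∨ c^[n] v ∈ B) ∧
      (∀ b ∈ B, ∃ u, u ∈ S ∧ u ∉ B ∧ c u = b) ∧
      (∀ b ∈ B, ∃ n, 0 < n ∧ c^[n] b = b ∧ ∀ i < n, c^[i] b ∈ S) := by
  intro S
  induction S using Finset.strongInduction with
  | _ S ih =>
    intro hc
    by_cases hcyc : ∃ b ∈ S, ∃ n, 0 < n ∧ c^[n] b = b ∧ ∀ i < n, c^[i] b ∈ S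
    · obtain ⟨b, hbS, n, hn0, hnb, hiter⟩ := hcyc
      have hsucc : ∀ z : V, c (c^[n - 1] z) = c^[n] z := by
        intro z
        conv_rhs => rw [show n = n - 1 + 1 by omega]
        rw [Function.iterate_succ_apply']
      obtain ⟨B', hB'sub, h1', h2', h3'⟩ := ih (S.erase b) (Finset.erase_ssubset hbS)
        (fun v hv => hc v (Finset.mem_of_mem_erase hv))
      have hbB' : b ∉ B' := fun h => (Finset.notMem_erase b S) (hB'sub h)
      refine ⟨insert b B', ?_, ?_, ?_, ?_⟩
      · intro x hx
        rcases Finset.mem_insert.1 hx with rfl | hx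
        · exact hbS
        · exact Finset.mem_of_mem_erase (hB'sub hx)
      · -- exit property
        intro v hvS hvB
        have hvb : v ≠ b := fun h => hvB (h ▸ Finset.mem_insert_self b B')
        have hvB' : v ∉ B' := fun h => hvB (Finset.mem_insert_of_mem h)
        obtain ⟨m, hm⟩ := h1' v (Finset.mem_erase.2 ⟨hvb, hvS⟩) hvB'
        refine ⟨m, ?_⟩
        rcases hm with hm | hm
        · by_cases hmb : c^[m] v = b
          · exact Or.inr (hmb ▸ Finset.mem_insert_self b B')
          · exact Or.inl (fun h => hm (Finset.mem_erase.2 ⟨hmb, h⟩))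
        · exact Or.inr (Finset.mem_insert_of_mem hm)
      · -- predecessor property
        intro x hx
        -- the successor of b is not in B'
        have hkey : ∀ y ∈ B', c b ≠ y := by
          intro y hy hcby
          obtain ⟨m, hm0, hmy, hmiter⟩ := h3' y hy
          have hyper : Function.IsPeriodicPt c m y := hmy
          have hb' : c^[(n-1) % m] y = b := by
            calc c^[(n-1) % m] y = c^[n-1] y := hyper.iterate_mod_apply (n-1)
              _ = b := by
                  rw [← hcby, ← Function.iterate_succ_apply, show (n - 1).succ = n by omega, hnb]
          have := hmiter ((n-1) % m) (Nat.mod_lt _ hm0)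
          rw [hb'] at this
          exact (Finset.notMem_erase b S) this
        rcases Finset.mem_insert.1 hx with heq | hx
        · -- x = b : predecessor of b on its cycle
          subst heq
          refine ⟨c^[n-1] x, hiter (n-1) (by omega), ?_, by rw [hsucc x, hnb]⟩
          intro h
          rcases Finset.mem_insert.1 h with h | h
          · have : c x = x := by conv_lhs => rw [← h, hsucc x, hnb]
            exact hc x hbS this
          · obtain ⟨m, hm0, hmy, hmiter⟩ := h3' _ h
            have hcx : c (c^[n - 1] x) = x := by rw [hsucc x, hnb]
            rcases Nat.lt_or_ge 1 m with h1m | h1m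
            · have := hmiter 1 h1m
              rw [Function.iterate_one, hcx] at this
              exact (Finset.notMem_erase x S) this
            · have hm1 : m = 1 := by omega
              subst hm1
              rw [Function.iterate_one] at hmy
              exact hc _ (Finset.mem_of_mem_erase (hB'sub h)) hmy
        · obtain ⟨u, huS, huB', hcu⟩ := h2' x hx
          refine ⟨u, Finset.mem_of_mem_erase huS, ?_, hcu⟩
          intro h
          rcases Finset.mem_insert.1 h with heq | h
          · exact hkey x hx (heq ▸ hcu)
          · exact huB' h
      · -- cyclicity
        intro x hx
        rcases Finset.mem_insert.1 hx with heq | hx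
        · subst heq; exact ⟨n, hn0, hnb, hiter⟩
        · obtain ⟨m, hm0, hmy, hmiter⟩ := h3' x hx
          exact ⟨m, hm0, hmy, fun i hi => Finset.mem_of_mem_erase (hmiter i hi)⟩
    · -- no cycle: B = ∅, every orbit leaves S
      refine ⟨∅, Finset.empty_subset _, ?_, by simp, by simp⟩
      intro v hvS _
      by_contra hall
      push_neg at hall
      have hin : ∀ n, c^[n] v ∈ S := fun n => (hall n).1
      have hmaps : ∀ n ∈ Finset.range (S.card + 1), c^[n] v ∈ S := fun n _ => hin n
      obtain ⟨i, hi, j, hj, hij, heq⟩ :=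
        Finset.exists_ne_map_eq_of_card_lt_of_maps_to (by simp) hmaps
      wlog hlt : i < j generalizing i j
      · exact this j hj i hi hij.symm heq.symm (by omega)
      apply hcyc
      refine ⟨c^[i] v, hin i, j - i, by omega, ?_, fun m _ => ?_⟩
      · rw [← Function.iterate_add_apply]
        have : j - i + i = j := by omega
        rw [this, heq]
      · rw [← Function.iterate_add_apply]; exact hin _


/-- A connected graph has at least `card V - 1` edges. -/
lemma stmt9.conn_card [Fintype V] (G : SimpleGraph V) (hG : G.Connected) :
    Fintype.card V ≤ G.edgeSet.ncard + 1 := by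
  classical
  have hne : Nonempty V := hG.nonempty
  obtain ⟨root⟩ := hne
  have hstep : ∀ w : V, w ≠ root → ∃ x, G.Adj w x ∧ G.dist x root < G.dist w root := by
    intro w hw
    have hr : G.Reachable w root := hG.preconnected w root
    have hd0 : G.dist w root ≠ 0 := by
      rw [SimpleGraph.dist_ne_zero_iff_ne_and_reachable]
      exact ⟨hw, hr⟩
    obtain ⟨p, hp⟩ := hr.exists_walk_length_eq_dist
    cases p with
    | nil => simp at hp hd0
    | @cons _ x _ h q =>
      refine ⟨x, h, ?_⟩
      have := SimpleGraph.dist_le q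
      simp [SimpleGraph.Walk.length_cons] at hp
      omega
  choose nxt hadj hdist using hstep
  -- injective map from non-root vertices into edges
  set f : {w : V // w ≠ root} → G.edgeSet :=
    fun w => ⟨s(w.1, nxt w.1 w.2), (hadj w.1 w.2)⟩ with hf
  have hinj : Function.Injective f := by
    rintro ⟨a, ha⟩ ⟨b, hb⟩ hab
    simp only [hf, Subtype.mk.injEq, Sym2.eq_iff] at hab
    replace hab := Sym2.eq_iff.1 (congrArg Subtype.val hab)
    rcases hab with ⟨h1, h2⟩ | ⟨h1, h2⟩
    · exact Subtype.ext h1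
    · exfalso
      have d1 := hdist a ha
      have d2 := hdist b hb
      rw [h2] at d1
      rw [← h1] at d2
      omega
  have hcard := Fintype.card_le_of_injective f hinj
  have h1 : Fintype.card {w : V // w ≠ root} = Fintype.card V - 1 := by
    simp [Fintype.card_subtype_compl]
  have h2 : G.edgeSet.ncard = Fintype.card G.edgeSet := by
    rw [Set.ncard_eq_toFinset_card', Set.toFinset_card]
  haveI : Nonempty V := ⟨root⟩
  have : 1 ≤ Fintype.card V := Fintype.card_pos
  omega

lemma stmt9.tree_of_card [Fintype V] (G : SimpleGraph V) (hG : G.Connected)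
    (hcard : G.edgeSet.ncard + 1 = Fintype.card V) : G.IsTree := by
  classical
  refine ⟨hG, ?_⟩
  rw [SimpleGraph.isAcyclic_iff_forall_adj_isBridge]
  by_contra hbad
  push_neg at hbad
  obtain ⟨v, w, hadj, hnb⟩ := hbad
  rw [SimpleGraph.isBridge_iff] at hnb
  have hreach : (G \ SimpleGraph.fromEdgeSet {s(v, w)}).Reachable v w := by
    by_contra h
    exact hnb h
  set G' := G \ SimpleGraph.fromEdgeSet {s(v, w)} with hG'
  have htrans : ∀ {a b : V}, G.Walk a b → G'.Reachable a b := by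
    intro a b pw
    induction pw with
    | nil => exact SimpleGraph.Reachable.refl _
    | @cons c d e h q ihq =>
      refine SimpleGraph.Reachable.trans ?_ ihq
      by_cases he : s(c, d) = s(v, w)
      · rw [Sym2.eq_iff] at he
        rcases he with ⟨rfl, rfl⟩ | ⟨rfl, rfl⟩
        · exact hreach
        · exact hreach.symm
      · apply SimpleGraph.Adj.reachable
        rw [hG', SimpleGraph.sdiff_adj, SimpleGraph.fromEdgeSet_adj]
        exact ⟨h, fun hc => he (by simpa using hc.1)⟩
  have hG'conn : G'.Connected := by
    rw [SimpleGraph.connected_iff]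
    refine ⟨fun a b => ?_, ⟨v⟩⟩
    obtain ⟨p⟩ := hG.preconnected a b
    exact htrans p
  have hfin : G.edgeSet.Finite := Set.toFinite _
  have hE' : G'.edgeSet = G.edgeSet \ {s(v, w)} := by
    rw [hG', SimpleGraph.edgeSet_sdiff, SimpleGraph.edgeSet_fromEdgeSet]
    have hd : ({s(v, w)} : Set (Sym2 V)) \ {e | e.IsDiag} = {s(v, w)} := by
      ext e
      simp only [Set.mem_diff, Set.mem_singleton_iff, Set.mem_setOf_eq]
      constructor
      · rintro ⟨h1, _⟩; exact h1
      · rintro rfl; exact ⟨rfl, by simp [hadj.ne]⟩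
    rw [Sym2.diagSet_eq_setOfPred_isDiag, hd]
  have hmem : s(v, w) ∈ G.edgeSet := hadj
  have hnc : G'.edgeSet.ncard = G.edgeSet.ncard - 1 := by
    rw [hE']
    exact Set.ncard_diff_singleton_of_mem hmem
  have hle := stmt9.conn_card G' hG'conn
  have hpos : 0 < G.edgeSet.ncard := by
    rw [Set.ncard_pos hfin]
    exact ⟨_, hmem⟩
  omega


/-- An internal vertex of a path has two distinct neighbors. -/
lemma stmt9.internal {G : SimpleGraph V} {a b v : V} (p : G.Walk a b) (hp : p.IsPath)
    (hv : v ∈ p.support) (hva : v ≠ a) (hvb : v ≠ b) :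
    ∃ x y, x ≠ y ∧ G.Adj v x ∧ G.Adj v y := by
  induction p with
  | nil =>
    simp only [SimpleGraph.Walk.support_nil, List.mem_singleton] at hv
    exact absurd hv hva
  | @cons c d e h q ihq =>
    simp only [SimpleGraph.Walk.support_cons, List.mem_cons] at hv
    rcases hv with rfl | hv
    · exact absurd rfl hva
    · by_cases hvd : v = d
      · subst hvd
        cases q with
        | nil => exact absurd rfl hvb
        | @cons _ y _ h' q' =>
          refine ⟨c, y, ?_, h.symm, h'⟩
          intro hcy
          subst hcy
          have := hp.support_nodup
          simp only [SimpleGraph.Walk.support_cons, List.nodup_cons] at this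
          exact this.1 (by simp [SimpleGraph.Walk.support_cons])
      · exact ihq hp.of_cons hv hvd hvb


/-- Main construction: re-attach every leaf in `S` by an alternative edge,
breaking cycles of the re-attachment map at a breaker set `B`. -/
lemma stmt9.build [Fintype V] [DecidableEq V] (G T : SimpleGraph V)
    (hsub : T ≤ G) (hT : T.IsTree)
    (p c : V → V) (L : Finset V)
    (hp : ∀ v ∈ L, T.Adj v (p v)) (hpu : ∀ v ∈ L, ∀ w, T.Adj v w → w = p v)
    (hpL : ∀ v ∈ L, p v ∉ L)
    (hc : ∀ v ∈ L, G.Adj v (c v) ∧ c v ≠ p v)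
    (S : Finset V) (hS : S ⊆ L) :
    ∃ (T' : SimpleGraph V) (B : Finset V) (u : V → V),
      T' ≤ G ∧ T'.IsTree ∧
      (∀ a b, a ∉ S → b ∉ S → (T'.Adj a b ↔ T.Adj a b)) ∧
      B ⊆ S ∧
      (∀ v ∈ S, v ∉ B → s(v, p v) ∉ T'.edgeSet) ∧
      (∀ b ∈ B, u b ∈ S ∧ u b ∉ B ∧ s(u b, b) ∈ T'.edgeSet) := by
  classical
  obtain ⟨B, hBS, hexit, hpred, -⟩ := stmt9.lemA c S (fun v hv => (hc v (hS hv)).1.ne')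
  set π : V → V := fun v => if v ∈ B then p v else c v with hπ
  have hπadj : ∀ v ∈ S, G.Adj v (π v) := by
    intro v hv
    rw [hπ]
    by_cases hvB : v ∈ B
    · simp only [if_pos hvB]
      exact hsub (hp v (hS hv))
    · simp only [if_neg hvB]
      exact (hc v (hS hv)).1
  have hπne : ∀ v ∈ S, π v ≠ v := fun v hv => (hπadj v hv).ne'
  -- rank function
  set r : V → ℕ := fun v => if h : ∃ n, c^[n] v ∉ S ∨ c^[n] v ∈ B then Nat.find h else 0 with hr
  have hrank : ∀ v, v ∈ S → v ∉ B → c v ∈ S → c v ∉ B → r (c v) < r v := by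
    intro v hvS hvB hcS hcB
    have hv := hexit v hvS hvB
    have hcv := hexit (c v) hcS hcB
    have h0 : Nat.find hv ≠ 0 := by
      intro h
      have hspec := Nat.find_spec hv
      rw [h] at hspec
      simp only [Function.iterate_zero, id_eq] at hspec
      rcases hspec with h' | h'
      · exact h' hvS
      · exact hvB h'
    have hle : Nat.find hcv ≤ Nat.find hv - 1 := by
      apply Nat.find_le
      have hspec := Nat.find_spec hv
      rw [show Nat.find hv = (Nat.find hv - 1) + 1 by omega] at hspec
      rwa [Function.iterate_succ_apply] at hspec
    rw [hr]
    simp only [dif_pos hcv, dif_pos hv]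
    omega
  set E1 : Set (Sym2 V) := {e | e ∈ T.edgeSet ∧ ∀ x ∈ S, ¬ x ∈ e} with hE1
  set E2 : Set (Sym2 V) := (fun v => s(v, π v)) '' ↑S with hE2
  set T' := SimpleGraph.fromEdgeSet (E1 ∪ E2) with hT'
  have hEG : E1 ∪ E2 ⊆ G.edgeSet := by
    rintro e (⟨he, -⟩ | ⟨v, hvS, rfl⟩)
    · exact SimpleGraph.edgeSet_mono hsub he
    · exact (G.mem_edgeSet).2 (hπadj v hvS)
  have hle : T' ≤ G := by
    rw [hT', ← SimpleGraph.fromEdgeSet_edgeSet G]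
    exact SimpleGraph.fromEdgeSet_mono hEG
  have hadj_iff : ∀ a b, a ∉ S → b ∉ S → (T'.Adj a b ↔ T.Adj a b) := by
    intro a b haS hbS
    rw [hT', SimpleGraph.fromEdgeSet_adj]
    constructor
    · rintro ⟨(⟨he, -⟩ | ⟨v, hvS, hve⟩), hne⟩
      · exact he
      · exfalso
        rcases Sym2.eq_iff.1 hve with ⟨h1, -⟩ | ⟨h1, -⟩
        · exact haS (h1 ▸ hvS)
        · exact hbS (h1 ▸ hvS)
    · intro h
      refine ⟨Or.inl ⟨(T.mem_edgeSet).2 h, fun x hx hxe => ?_⟩, h.ne⟩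
      rcases Sym2.mem_iff.1 hxe with rfl | rfl
      · exact haS hx
      · exact hbS hx
  have hnd : ∀ e ∈ E1 ∪ E2, ¬ e.IsDiag := by
    rintro e (⟨he, -⟩ | ⟨v, hvS, rfl⟩)
    · exact SimpleGraph.not_isDiag_of_mem_edgeSet T he
    · simp only [Sym2.isDiag_iff_proj_eq]
      exact fun h => hπne v hvS h.symm
  have hES : T'.edgeSet = E1 ∪ E2 := by
    rw [hT', SimpleGraph.edgeSet_fromEdgeSet]
    ext e
    simp only [Set.mem_diff, Set.mem_setOf_eq]
    exact ⟨fun h => h.1, fun h => ⟨h, hnd e h⟩⟩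
  have h1 : ∀ v ∈ S, v ∉ B → s(v, p v) ∉ T'.edgeSet := by
    intro v hvS hvB hmem
    rw [hES] at hmem
    rcases hmem with ⟨-, hno⟩ | ⟨w, hwS, heq⟩
    · exact hno v hvS (by simp)
    · rcases Sym2.eq_iff.1 heq with ⟨heq1, hpw⟩ | ⟨h1', h2'⟩
      · have hcv : π v = c v := if_neg hvB
        rw [heq1, hcv] at hpw
        exact (hc v (hS hvS)).2 hpw
      · have hmem' : p v ∈ S := by rw [← h1']; exact_mod_cast hwS
        exact hpL v (hS hvS) (hS hmem')
  have hpred' : ∀ b, ∃ u, b ∈ B → (u ∈ S ∧ u ∉ B ∧ c u = b) := by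
    intro b
    by_cases hb : b ∈ B
    · obtain ⟨u, h⟩ := hpred b hb
      exact ⟨u, fun _ => h⟩
    · exact ⟨b, fun h => absurd h hb⟩
  choose u hu using hpred'
  have h2 : ∀ b ∈ B, u b ∈ S ∧ u b ∉ B ∧ s(u b, b) ∈ T'.edgeSet := by
    intro b hb
    obtain ⟨huS, huB, hcu⟩ := hu b hb
    refine ⟨huS, huB, ?_⟩
    rw [hES]
    right
    refine ⟨u b, by exact_mod_cast huS, ?_⟩
    simp only
    rw [show π (u b) = c (u b) from if_neg huB, hcu]
  -- connectivity
  obtain ⟨u0, hu0⟩ : ∃ u0, u0 ∉ S := by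
    by_cases hSe : S.Nonempty
    · obtain ⟨v0, hv0⟩ := hSe
      exact ⟨p v0, fun h => hpL v0 (hS hv0) (hS h)⟩
    · rw [Finset.not_nonempty_iff_eq_empty] at hSe
      obtain ⟨x⟩ := hT.isConnected.nonempty
      exact ⟨x, by simp [hSe]⟩
  have hW : ∀ {a b : V} (q : T.Walk a b), (∀ x ∈ q.support, x ∉ S) → T'.Reachable a b := by
    intro a b q
    induction q with
    | nil => exact fun _ => SimpleGraph.Reachable.refl _
    | @cons a' x' b' h q' ihq =>
      intro hsup
      have hx : x' ∉ S := hsup x' (by simp)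
      have ha : a' ∉ S := hsup a' (by simp)
      refine SimpleGraph.Reachable.trans (SimpleGraph.Adj.reachable ?_)
        (ihq fun y hy => hsup y (by simp [hy]))
      exact (hadj_iff a' x' ha hx).2 h
  have sub1 : ∀ a b : V, a ∉ S → b ∉ S → T'.Reachable a b := by
    intro a b ha hb
    obtain ⟨q0⟩ := hT.isConnected.preconnected a b
    obtain q := q0.toPath
    apply hW q.val
    intro x hx hxS
    by_cases hxa : x = a
    · exact ha (hxa ▸ hxS)
    by_cases hxb : x = b
    · exact hb (hxb ▸ hxS)
    obtain ⟨x1, y1, hxy, hh1, hh2⟩ := stmt9.internal q.val q.property hx hxa hxb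
    have e1 := hpu x (hS hxS) x1 hh1
    have e2 := hpu x (hS hxS) y1 hh2
    exact hxy (e1.trans e2.symm)
  have hAdjπ : ∀ v ∈ S, T'.Adj v (π v) := by
    intro v hv
    rw [hT', SimpleGraph.fromEdgeSet_adj]
    exact ⟨Or.inr ⟨v, by exact_mod_cast hv, rfl⟩, (hπadj v hv).ne⟩
  have subB : ∀ b ∈ B, T'.Reachable b u0 := by
    intro b hb
    have hpb : π b = p b := if_pos hb
    have hbL : b ∈ L := hS (hBS hb)
    have hpS : p b ∉ S := fun h => hpL b hbL (hS h)
    have := (hAdjπ b (hBS hb)).reachable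
    rw [hpb] at this
    exact this.trans (sub1 (p b) u0 hpS hu0)
  have sub2 : ∀ n, ∀ v ∈ S, r v < n → T'.Reachable v u0 := by
    intro n
    induction n with
    | zero => exact fun v _ h => absurd h (by omega)
    | succ n ih =>
      intro v hvS hrv
      by_cases hvB : v ∈ B
      · exact subB v hvB
      · have hπv : π v = c v := if_neg hvB
        have hadj := hAdjπ v hvS
        rw [hπv] at hadj
        refine hadj.reachable.trans ?_
        by_cases hcS : c v ∈ S
        · by_cases hcB : c v ∈ B
          · exact subB _ hcB
          · exact ih _ hcS (by have := hrank v hvS hvB hcS hcB; omega)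
        · exact sub1 _ _ hcS hu0
  have hreach : ∀ a : V, T'.Reachable a u0 := by
    intro a
    by_cases h : a ∈ S
    · exact sub2 (r a + 1) a h (by omega)
    · exact sub1 a u0 h hu0
  have hconn : T'.Connected := by
    rw [SimpleGraph.connected_iff]
    exact ⟨fun a b => (hreach a).trans (hreach b).symm, ⟨u0⟩⟩
  -- counting
  have himg_p : Set.InjOn (fun v => s(v, p v)) ↑S := by
    intro v hv w hw heq
    rcases Sym2.eq_iff.1 heq with ⟨h1', -⟩ | ⟨h1', h2'⟩
    · exact h1'
    · exfalso
      exact hpL v (hS hv) (h2' ▸ hS hw)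
  have himgsub : (fun v => s(v, p v)) '' ↑S ⊆ T.edgeSet := by
    rintro e ⟨v, hv, rfl⟩
    exact (T.mem_edgeSet).2 (hp v (hS hv))
  have hE1eq : E1 = T.edgeSet \ (fun v => s(v, p v)) '' ↑S := by
    ext e
    induction e using Sym2.ind with
    | _ a b =>
      simp only [hE1, Set.mem_setOf_eq, Set.mem_diff, Set.mem_image]
      constructor
      · rintro ⟨he, hno⟩
        refine ⟨he, ?_⟩
        rintro ⟨v, hvS, heq⟩
        exact hno v hvS (heq ▸ (by simp : v ∈ s(v, p v)))
      · rintro ⟨he, hno⟩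
        refine ⟨he, fun x hx hxe => hno ?_⟩
        rcases Sym2.mem_iff.1 hxe with rfl | rfl
        · exact ⟨x, hx, by rw [hpu x (hS hx) b ((T.mem_edgeSet).1 he)]⟩
        · exact ⟨x, hx, by rw [hpu x (hS hx) a ((T.mem_edgeSet).1 he).symm, Sym2.eq_swap]⟩
  have hTcard : T.edgeSet.ncard + 1 = Fintype.card V := by
    have h := hT.card_edgeFinset
    have h2 : T.edgeSet.ncard = T.edgeFinset.card := by
      rw [Set.ncard_eq_toFinset_card']
      congr 1
    omega
  have hScard : S.card ≤ Fintype.card V - 1 := by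
    have h := Set.ncard_le_ncard himgsub (Set.toFinite _)
    rw [Set.ncard_image_of_injOn himg_p, Set.ncard_coe_finset] at h
    omega
  have hE1card : E1.ncard = (Fintype.card V - 1) - S.card := by
    rw [hE1eq, Set.ncard_diff himgsub (Set.toFinite _),
      Set.ncard_image_of_injOn himg_p, Set.ncard_coe_finset]
    omega
  have hinjπ : Set.InjOn (fun v => s(v, π v)) ↑S := by
    intro v hv w hw heq
    rcases Sym2.eq_iff.1 heq with ⟨h1', -⟩ | ⟨h1', h2'⟩
    · exact h1'
    · exfalso
      have hvS : v ∈ S := hv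
      have hwS : w ∈ S := hw
      by_cases hwB : w ∈ B
      · rw [show π w = p w from if_pos hwB] at h1'
        exact hpL w (hS hwS) (h1' ▸ hS hvS)
      by_cases hvB : v ∈ B
      · rw [show π v = p v from if_pos hvB] at h2'
        exact hpL v (hS hvS) (h2' ▸ hS hwS)
      rw [show π v = c v from if_neg hvB] at h2'
      rw [show π w = c w from if_neg hwB] at h1'
      have r1 := hrank v hvS hvB (by rw [h2']; exact hwS) (by rw [h2']; exact hwB)
      have r2 := hrank w hwS hwB (by rw [← h1']; exact hvS) (by rw [← h1']; exact hvB)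
      rw [h2'] at r1
      rw [← h1'] at r2
      omega
  have hE2card : E2.ncard = S.card := by
    rw [hE2, Set.ncard_image_of_injOn hinjπ, Set.ncard_coe_finset]
  have hdisj : Disjoint E1 E2 := by
    rw [Set.disjoint_left]
    rintro e ⟨-, hno⟩ ⟨v, hvS, rfl⟩
    exact hno v hvS (by simp)
  have hEcard : T'.edgeSet.ncard + 1 = Fintype.card V := by
    rw [hES, Set.ncard_union_eq hdisj (Set.toFinite _) (Set.toFinite _), hE1card, hE2card]
    haveI : Nonempty V := hT.isConnected.nonempty
    have : 1 ≤ Fintype.card V := Fintype.card_pos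
    omega
  have htree : T'.IsTree := stmt9.tree_of_card T' hconn hEcard
  exact ⟨T', B, u, hle, htree, hadj_iff, hBS, h1, h2⟩


end stmt9aux

/-- If a spanning tree T of a connected graph G has a set L of at least 2⌈k/4⌉ℓ leaves,
each of degree at least 2 in G, then G has ℓ pairwise k-diverse spanning trees. -/
theorem stmt9 {V : Type*} [Fintype V] (G T : SimpleGraph V)
    (k ℓ : ℕ) (hk : 1 ≤ k) (hℓ : 1 ≤ ℓ)
    (hG : G.Connected) (hsub : T ≤ G) (hT : T.IsTree)
    (L : Finset V)
    (hleaf : ∀ v ∈ L, (T.neighborSet v).ncard = 1)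
    (hdeg : ∀ v ∈ L, 2 ≤ (G.neighborSet v).ncard)
    (hL : 2 * ((k + 3) / 4) * ℓ ≤ L.card) :
    ∃ Ts : Fin ℓ → SimpleGraph V, (∀ i, Ts i ≤ G ∧ (Ts i).IsTree) ∧
      ∀ i j, i ≠ j → k ≤ (symmDiff (Ts i).edgeSet (Ts j).edgeSet).ncard := by
  classical
  -- the unique tree-neighbor of each leaf
  have hex : ∀ v : V, ∃ w, v ∈ L → (T.Adj v w ∧ ∀ x, T.Adj v x → x = w) := by
    intro v
    by_cases hv : v ∈ L
    · obtain ⟨a, ha⟩ := Set.ncard_eq_one.1 (hleaf v hv)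
      refine ⟨a, fun _ => ⟨?_, ?_⟩⟩
      · have : a ∈ T.neighborSet v := by rw [ha]; exact rfl
        exact this
      · intro x hx
        have hx' : x ∈ T.neighborSet v := hx
        rw [ha] at hx'
        exact hx'
    · exact ⟨v, fun h => absurd h hv⟩
  choose p hp using hex
  have hpadj : ∀ v ∈ L, T.Adj v (p v) := fun v hv => (hp v hv).1
  have hpu : ∀ v ∈ L, ∀ w, T.Adj v w → w = p v := fun v hv w hw => (hp v hv).2 w hw
  have hpL : ∀ v ∈ L, p v ∉ L := by
    intro v hv hpvL
    have hvp : v = p (p v) := hpu (p v) hpvL v (hpadj v hv).symm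
    have hclosed : ∀ a b : V, T.Adj a b → a = v ∨ a = p v → b = v ∨ b = p v := by
      intro a b hab ha
      rcases ha with rfl | ha
      · exact Or.inr (hpu a hv b hab)
      · subst ha
        have hb := hpu (p v) hpvL b hab
        exact Or.inl (by rw [hb, ← hvp])
    have hall : ∀ a : V, a = v ∨ a = p v := by
      have hwalk : ∀ {x y : V} (_ : T.Walk x y), x = v ∨ x = p v → y = v ∨ y = p v := by
        intro x y q
        induction q with
        | nil => exact id
        | @cons a' x' b' h q' ih => exact fun hx => ih (hclosed _ _ h hx)
      intro a
      obtain ⟨q⟩ := hT.isConnected.preconnected v a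
      exact hwalk q (Or.inl rfl)
    have hsubnbr : G.neighborSet v ⊆ {p v} := by
      intro x hx
      rcases hall x with rfl | rfl
      · exact absurd hx (G.irrefl)
      · rfl
    have hcount := Set.ncard_le_ncard hsubnbr (Set.finite_singleton _)
    rw [Set.ncard_singleton] at hcount
    have := hdeg v hv
    omega
  -- an alternative G-neighbor of each leaf
  have hcex : ∀ v : V, ∃ w, v ∈ L → (G.Adj v w ∧ w ≠ p v) := by
    intro v
    by_cases hv : v ∈ L
    · have hnot : ¬ (G.neighborSet v ⊆ {p v}) := by
        intro hsub'
        have hcount := Set.ncard_le_ncard hsub' (Set.finite_singleton _)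
        rw [Set.ncard_singleton] at hcount
        have := hdeg v hv
        omega
      obtain ⟨x, hx1, hx2⟩ := Set.not_subset.1 hnot
      exact ⟨x, fun _ => ⟨hx1, by simpa using hx2⟩⟩
    · exact ⟨v, fun h => absurd h hv⟩
  choose cc hcc using hcex
  -- partition a subset of L into ℓ groups of size 2⌈k/4⌉
  set m : ℕ := (k + 3) / 4 with hm
  set s : ℕ := 2 * m with hs
  have hs0 : 0 < s := by omega
  obtain ⟨L', hL'sub, hL'card⟩ := Finset.exists_subset_card_eq (s := L) (n := s * ℓ)
    (by rw [hs, hm]; exact hL)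
  have e : {x // x ∈ L'} ≃ Fin (s * ℓ) := L'.equivFin.trans (finCongr hL'card)
  have hidx : ∀ (i : Fin ℓ) (t : Fin s), s * (i : ℕ) + (t : ℕ) < s * ℓ := by
    intro i t
    calc s * (i : ℕ) + (t : ℕ) < s * (i : ℕ) + s := by omega
      _ = s * ((i : ℕ) + 1) := by ring
      _ ≤ s * ℓ := Nat.mul_le_mul_left s i.2
  set emb : Fin ℓ → Fin s → V := fun i t => (e.symm ⟨s * (i : ℕ) + (t : ℕ), hidx i t⟩ : L').1
    with hemb
  have hembL' : ∀ i t, emb i t ∈ L' := fun i t => (e.symm _).2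
  have hembinj : ∀ i t i' t', emb i t = emb i' t' → i = i' ∧ t = t' := by
    intro i t i' t' h
    rw [hemb] at h
    have h2 := e.symm.injective (Subtype.ext h)
    have h3 : s * (i : ℕ) + (t : ℕ) = s * (i' : ℕ) + (t' : ℕ) := by
      have := congrArg (fun x : Fin (s * ℓ) => (x : ℕ)) h2
      simpa [Fin.val_mk] using this
    have hdiv : ∀ (a b : ℕ), b < s → (s * a + b) / s = a := by
      intro a b hb
      rw [Nat.mul_add_div hs0, Nat.div_eq_of_lt hb, Nat.add_zero]
    have hii : (i : ℕ) = (i' : ℕ) := by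
      have := congrArg (· / s) h3
      simpa [hdiv _ _ t.2, hdiv _ _ t'.2] using this
    have htt : (t : ℕ) = (t' : ℕ) := by rw [hii] at h3; omega
    exact ⟨Fin.ext hii, Fin.ext htt⟩
  set Sg : Fin ℓ → Finset V := fun i => Finset.image (emb i) Finset.univ with hSg
  have hSgL : ∀ i, Sg i ⊆ L := by
    intro i x hx
    rw [hSg] at hx
    obtain ⟨t, -, rfl⟩ := Finset.mem_image.1 hx
    exact hL'sub (hembL' i t)
  have hSgcard : ∀ i, (Sg i).card = s := by
    intro i
    rw [hSg]
    rw [Finset.card_image_of_injective _ (fun t t' h => (hembinj i t i t' h).2)]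
    simp
  have hSgdisj : ∀ i j, i ≠ j → Disjoint (Sg i) (Sg j) := by
    intro i j hij
    rw [Finset.disjoint_left]
    intro x hxi hxj
    rw [hSg] at hxi hxj
    obtain ⟨t, -, rfl⟩ := Finset.mem_image.1 hxi
    obtain ⟨t', -, heq⟩ := Finset.mem_image.1 hxj
    exact hij ((hembinj j t' i t heq).1.symm)
  -- build the trees
  have hbuild := fun i => stmt9.build G T hsub hT p cc L hpadj hpu hpL
    (fun v hv => hcc v hv) (Sg i) (hSgL i)
  choose Ts Bs us hle htree hadj_iff hBsub hh1 hh2 using hbuild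
  refine ⟨Ts, fun i => ⟨hle i, htree i⟩, ?_⟩
  intro i j hij
  have hdisj := hSgdisj i j hij
  set F : V → Sym2 V := fun v =>
    if v ∈ Bs i then s(us i v, v) else if v ∈ Bs j then s(us j v, v) else s(v, p v) with hF
  -- non-tree-edge fact
  have hnoT : ∀ w v : V, w ∈ L → v ∈ L → ¬ T.Adj w v := by
    intro w v hw hv hadj
    exact hpL w hw ((hpu w hw v hadj) ▸ hv)
  -- membership of F-images in the symmetric difference
  have hmemF : ∀ v ∈ Sg i ∪ Sg j, F v ∈ symmDiff (Ts i).edgeSet (Ts j).edgeSet := by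
    intro v hv
    rw [Finset.mem_union] at hv
    rw [Set.mem_symmDiff]
    rcases hv with hv | hv
    · have hvL : v ∈ L := hSgL i hv
      have hvnj : v ∉ Sg j := Finset.disjoint_left.1 hdisj hv
      by_cases hB : v ∈ Bs i
      · left
        rw [hF]; simp only [if_pos hB]
        obtain ⟨huS, huB, hedge⟩ := hh2 i v hB
        refine ⟨hedge, ?_⟩
        rw [SimpleGraph.mem_edgeSet,
          hadj_iff j _ _ (Finset.disjoint_left.1 hdisj huS) hvnj]
        exact hnoT _ _ (hSgL i huS) hvL
      · right
        have hBj : v ∉ Bs j := fun h => hvnj (hBsub j h)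
        rw [hF]; simp only [if_neg hB, if_neg hBj]
        constructor
        · rw [SimpleGraph.mem_edgeSet, hadj_iff j _ _ hvnj (fun h => hpL v hvL (hSgL j h))]
          exact hpadj v hvL
        · exact hh1 i v hv hB
    · have hvL : v ∈ L := hSgL j hv
      have hvni : v ∉ Sg i := Finset.disjoint_right.1 hdisj hv
      have hBi : v ∉ Bs i := fun h => hvni (hBsub i h)
      by_cases hB : v ∈ Bs j
      · right
        rw [hF]; simp only [if_neg hBi, if_pos hB]
        obtain ⟨huS, huB, hedge⟩ := hh2 j v hB
        refine ⟨hedge, ?_⟩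
        rw [SimpleGraph.mem_edgeSet,
          hadj_iff i _ _ (Finset.disjoint_right.1 hdisj huS) hvni]
        exact hnoT _ _ (hSgL j huS) hvL
      · left
        rw [hF]; simp only [if_neg hBi, if_neg hB]
        constructor
        · rw [SimpleGraph.mem_edgeSet, hadj_iff i _ _ hvni (fun h => hpL v hvL (hSgL i h))]
          exact hpadj v hvL
        · exact hh1 j v hv hB
  -- shape of F for injectivity
  have hshape : ∀ v ∈ Sg i ∪ Sg j,
      (F v = s(v, p v) ∧ v ∉ Bs i ∧ v ∉ Bs j) ∨
      (∃ w, w ∈ Sg i ∪ Sg j ∧ w ∉ Bs i ∧ w ∉ Bs j ∧ F v = s(w, v) ∧ (v ∈ Bs i ∨ v ∈ Bs j)) := by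
    intro v hv
    rw [Finset.mem_union] at hv
    by_cases hBi : v ∈ Bs i
    · obtain ⟨huS, huB, -⟩ := hh2 i v hBi
      refine Or.inr ⟨us i v, Finset.mem_union.2 (Or.inl huS), huB,
        fun h => (Finset.disjoint_left.1 hdisj huS) (hBsub j h), ?_, Or.inl hBi⟩
      rw [hF]; simp only [if_pos hBi]
    · by_cases hBj : v ∈ Bs j
      · obtain ⟨huS, huB, -⟩ := hh2 j v hBj
        refine Or.inr ⟨us j v, Finset.mem_union.2 (Or.inr huS),
          fun h => (Finset.disjoint_right.1 hdisj huS) (hBsub i h), huB, ?_, Or.inr hBj⟩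
        rw [hF]; simp only [if_neg hBi, if_pos hBj]
      · refine Or.inl ⟨?_, hBi, hBj⟩
        rw [hF]; simp only [if_neg hBi, if_neg hBj]
  have hunionL : ∀ v ∈ Sg i ∪ Sg j, v ∈ L := by
    intro v hv
    rcases Finset.mem_union.1 hv with h | h
    · exact hSgL i h
    · exact hSgL j h
  have hinjF : Set.InjOn F ↑(Sg i ∪ Sg j) := by
    intro v hv v' hv' heq
    have hv1 : v ∈ Sg i ∪ Sg j := hv
    have hv'1 : v' ∈ Sg i ∪ Sg j := hv'
    rcases hshape v hv1 with ⟨hFv, hvBi, hvBj⟩ | ⟨w, hwU, hwBi, hwBj, hFv, hvB⟩ <;>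
      rcases hshape v' hv'1 with ⟨hFv', hvBi', hvBj'⟩ | ⟨w', hwU', hwBi', hwBj', hFv', hvB'⟩
    · rw [hFv, hFv'] at heq
      rcases Sym2.eq_iff.1 heq with ⟨h1, -⟩ | ⟨h1, h2⟩
      · exact h1
      · exfalso
        apply hpL v' (hunionL v' hv'1)
        rw [← h1]
        exact hunionL v hv1
    · rw [hFv, hFv'] at heq
      rcases Sym2.eq_iff.1 heq with ⟨h1, h2⟩ | ⟨h1, h2⟩
      · exfalso
        apply hpL v (hunionL v hv1)
        rw [h2]
        exact hunionL v' hv'1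
      · exfalso
        apply hpL v (hunionL v hv1)
        rw [h2]
        exact hunionL w' hwU'
    · rw [hFv, hFv'] at heq
      rcases Sym2.eq_iff.1 heq with ⟨h1, h2⟩ | ⟨h1, h2⟩
      · exfalso
        apply hpL v' (hunionL v' hv'1)
        rw [← h2]
        exact hunionL v hv1
      · exfalso
        apply hpL v' (hunionL v' hv'1)
        rw [← h1]
        exact hunionL w hwU
    · rw [hFv, hFv'] at heq
      rcases Sym2.eq_iff.1 heq with ⟨-, h2⟩ | ⟨h1, h2⟩
      · exact h2
      · exfalso
        rcases hvB' with hb | hb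
        · exact hwBi (h1 ▸ hb)
        · exact hwBj (h1 ▸ hb)
  -- count
  have himg : F '' ↑(Sg i ∪ Sg j) ⊆ symmDiff (Ts i).edgeSet (Ts j).edgeSet := by
    rintro e' ⟨v, hv, rfl⟩
    exact hmemF v hv
  have hcount : (Sg i ∪ Sg j).card ≤ (symmDiff (Ts i).edgeSet (Ts j).edgeSet).ncard := by
    calc (Sg i ∪ Sg j).card = (↑(Sg i ∪ Sg j) : Set V).ncard := (Set.ncard_coe_finset _).symm
      _ = (F '' ↑(Sg i ∪ Sg j)).ncard := (Set.ncard_image_of_injOn hinjF).symm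
      _ ≤ _ := Set.ncard_le_ncard himg (Set.toFinite _)
  have hcard : (Sg i ∪ Sg j).card = s + s := by
    rw [Finset.card_union_of_disjoint hdisj, hSgcard i, hSgcard j]
  rw [hcard] at hcount
  have : k ≤ s + s := by omega
  omega
end

section
/- Let T be a spanning tree of a connected graph G with s leaves, let P = (v_0, ..., v_d) with d ≥ 7 be a path in T whose internal vertices have degree 2 in T, and suppose some vertex v ∈ {v_3, ..., v_{d−3}} has a neighbor w in G with vw ∉ E(T). Then G has a spanning tree with at least s + 1 leaves, and every leaf of the new tree that is not a leaf of T is an internal vertex of P. -/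
open Finset SimpleGraph

namespace StmtAux

variable {V : Type*}

lemma getVert_mem_support {G : SimpleGraph V} {u v : V} (w : G.Walk u v) (j : ℕ) :
    w.getVert j ∈ w.support := by
  induction w generalizing j with
  | nil =>
    rw [SimpleGraph.Walk.getVert_of_length_le _ (by simp)]
    exact SimpleGraph.Walk.end_mem_support _
  | cons ha q ih =>
    cases j with
    | zero => rw [SimpleGraph.Walk.getVert_zero]; exact SimpleGraph.Walk.start_mem_support _
    | succ j =>
      rw [SimpleGraph.Walk.getVert_cons_succ]
      rw [SimpleGraph.Walk.support_cons]
      exact List.mem_cons_of_mem _ (ih j)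

lemma getVert_inj {G : SimpleGraph V} {u v : V} (w : G.Walk u v) :
    w.IsPath → ∀ j k, j ≤ w.length → k ≤ w.length →
      w.getVert j = w.getVert k → j = k := by
  induction w with
  | nil =>
    intro _ j k hj hk _
    simp only [SimpleGraph.Walk.length_nil, Nat.le_zero] at hj hk
    omega
  | cons ha q ih =>
    intro hw j k hj hk hjk
    rw [SimpleGraph.Walk.cons_isPath_iff] at hw
    match j, k with
    | 0, 0 => rfl
    | 0, k + 1 =>
      exfalso
      rw [SimpleGraph.Walk.getVert_zero, SimpleGraph.Walk.getVert_cons_succ] at hjk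
      exact hw.2 (hjk ▸ getVert_mem_support q k)
    | j + 1, 0 =>
      exfalso
      rw [SimpleGraph.Walk.getVert_zero, SimpleGraph.Walk.getVert_cons_succ] at hjk
      exact hw.2 (hjk ▸ getVert_mem_support q j)
    | j + 1, k + 1 =>
      rw [SimpleGraph.Walk.getVert_cons_succ, SimpleGraph.Walk.getVert_cons_succ] at hjk
      rw [SimpleGraph.Walk.length_cons] at hj hk
      have := ih hw.1 j k (by omega) (by omega) hjk
      omega

open scoped Classical in
lemma nb_two {G : SimpleGraph V} [Fintype V] {m α β : V} (h1 : G.Adj m α) (h2 : G.Adj m β)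
    (hne : α ≠ β) (hdeg : G.degree m = 2) {y : V} (hy : G.Adj m y) : y = α ∨ y = β := by
  have hsub : ({α, β} : Finset V) ⊆ G.neighborFinset m := by
    intro z hz
    rw [Finset.mem_insert, Finset.mem_singleton] at hz
    rcases hz with rfl | rfl
    · exact (SimpleGraph.mem_neighborFinset _ _ _).mpr h1
    · exact (SimpleGraph.mem_neighborFinset _ _ _).mpr h2
  have hcard : (G.neighborFinset m).card ≤ ({α, β} : Finset V).card := by
    rw [Finset.card_pair hne, SimpleGraph.card_neighborFinset_eq_degree, hdeg]
  have heq := Finset.eq_of_subset_of_card_le hsub hcard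
  have hmem : y ∈ ({α, β} : Finset V) := by
    rw [heq]; exact (SimpleGraph.mem_neighborFinset _ _ _).mpr hy
  simpa using hmem

lemma second_step {G : SimpleGraph V} {c x vv t : V} (q : G.Walk c x)
    (hcx : c ≠ x) (hvv : vv ∉ q.support)
    (hnb : ∀ y, G.Adj c y → y = vv ∨ y = t) : s(c, t) ∈ q.edges := by
  obtain ⟨y2, h2, q'', rfl⟩ := SimpleGraph.Walk.exists_eq_cons_of_ne hcx q
  rcases hnb y2 h2 with rfl | rfl
  · exfalso
    rw [SimpleGraph.Walk.support_cons] at hvv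
    exact hvv (List.mem_cons_of_mem _ q''.start_mem_support)
  · rw [SimpleGraph.Walk.edges_cons]
    exact List.mem_cons_self

lemma reachable_patch {H : SimpleGraph V} {c d : V}
    (h : (H.deleteEdges {s(c, d)}).Reachable c d) {y z : V} (r : H.Reachable y z) :
    (H.deleteEdges {s(c, d)}).Reachable y z := by
  obtain ⟨W⟩ := r
  induction W with
  | nil => exact SimpleGraph.Reachable.refl _
  | @cons a b' z' ha W ih =>
    by_cases he : s(a, b') = s(c, d)
    · rw [Sym2.eq_iff] at he
      rcases he with ⟨rfl, rfl⟩ | ⟨rfl, rfl⟩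
      · exact h.trans ih
      · exact h.symm.trans ih
    · refine (SimpleGraph.Adj.reachable ?_).trans ih
      rw [SimpleGraph.deleteEdges_adj]
      exact ⟨ha, by simpa using he⟩

open scoped Classical in
lemma aux [Fintype V] (G T : SimpleGraph V) (hsub : T ≤ G) (hT : T.IsTree)
    (u x c d2 : V) (hadjG : G.Adj u x) (hnotT : s(u, x) ∉ T.edgeSet)
    (huc : T.Adj u c) (hcd : T.Adj c d2) (hud : u ≠ d2)
    (hdegu : T.degree u = 2) (hdegc : T.degree c = 2) (hdegd : T.degree d2 = 2)
    (p : T.Walk x u) (hp : p.IsPath) (hep : s(c, d2) ∈ p.edges) :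
    ∃ T' : SimpleGraph V, T' ≤ G ∧ T'.IsTree ∧
      (Finset.univ.filter fun z : V => T.degree z = 1).card + 1 ≤
        (Finset.univ.filter fun z : V => T'.degree z = 1).card ∧
      ∀ z : V, T'.degree z = 1 → T.degree z ≠ 1 → z = c ∨ z = d2 := by
  have hux : u ≠ x := hadjG.ne
  have huc' : u ≠ c := huc.ne
  have hcd' : c ≠ d2 := hcd.ne
  have hxc : x ≠ c := by
    rintro rfl
    exact hnotT ((SimpleGraph.mem_edgeSet T).mpr huc)
  have hfe : s(u, x) ≠ s(c, d2) := by
    intro h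
    exact hnotT (by rw [h]; exact (SimpleGraph.mem_edgeSet T).mpr hcd)
  set H := T ⊔ SimpleGraph.fromEdgeSet {s(u, x)} with hH
  set T' := H.deleteEdges {s(c, d2)} with hT'
  letI : DecidableRel T'.Adj := fun a b => Classical.propDecidable (T'.Adj a b)
  have hadj' : ∀ y z : V, T'.Adj y z ↔
      ((T.Adj y z ∧ s(y, z) ≠ s(c, d2)) ∨ s(y, z) = s(u, x)) := by
    intro y z
    rw [hT', SimpleGraph.deleteEdges_adj, hH, SimpleGraph.sup_adj,
      SimpleGraph.fromEdgeSet_adj]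
    constructor
    · rintro ⟨hA | ⟨h1, _⟩, hne⟩
      · exact Or.inl ⟨hA, by simpa using hne⟩
      · exact Or.inr (by simpa using h1)
    · rintro (⟨hA, hne⟩ | h1)
      · exact ⟨Or.inl hA, by simpa using hne⟩
      · refine ⟨Or.inr ⟨by simpa using h1, ?_⟩, ?_⟩
        · rintro rfl
          rw [Sym2.eq_iff] at h1
          rcases h1 with ⟨h1a, h1b⟩ | ⟨h1a, h1b⟩
          · exact hux (h1a.symm.trans h1b)
          · exact hux (h1b.symm.trans h1a)
        · simp only [Set.mem_singleton_iff]
          rw [h1]; exact hfe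
  -- T' ≤ G
  have hle : T' ≤ G := by
    intro y z hyz
    rcases (hadj' y z).mp hyz with ⟨hA, _⟩ | h1
    · exact hsub hA
    · rw [Sym2.eq_iff] at h1
      rcases h1 with ⟨rfl, rfl⟩ | ⟨rfl, rfl⟩
      · exact hadjG
      · exact hadjG.symm
  -- connectivity
  have hTH : T ≤ H := le_sup_left
  have hHconn : H.Connected := hT.isConnected.mono hTH
  have hpe : ∀ e' ∈ p.edges, e' ∈ H.edgeSet := fun e' he' =>
    (SimpleGraph.edgeSet_mono hTH) (p.edges_subset_edgeSet he')
  have hpH : (p.transfer H hpe).IsPath := hp.transfer hpe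
  have hAdjux : H.Adj u x := by
    rw [hH, SimpleGraph.sup_adj, SimpleGraph.fromEdgeSet_adj]
    exact Or.inr ⟨Set.mem_singleton _, hux⟩
  have hfnotp : s(u, x) ∉ (p.transfer H hpe).edges := by
    rw [SimpleGraph.Walk.edges_transfer]
    intro h
    exact hnotT (p.edges_subset_edgeSet h)
  have hcyc : (SimpleGraph.Walk.cons hAdjux
      ((⟨p.transfer H hpe, hpH⟩ : H.Path x u) : H.Walk x u)).IsCycle :=
    SimpleGraph.Path.cons_isCycle ⟨p.transfer H hpe, hpH⟩ hAdjux hfnotp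
  have hmemcyc : s(c, d2) ∈ (SimpleGraph.Walk.cons hAdjux
      ((⟨p.transfer H hpe, hpH⟩ : H.Path x u) : H.Walk x u)).edges := by
    rw [SimpleGraph.Walk.edges_cons]
    refine List.mem_cons_of_mem _ ?_
    show s(c, d2) ∈ (p.transfer H hpe).edges
    rw [SimpleGraph.Walk.edges_transfer]
    exact hep
  have hkey := (SimpleGraph.adj_and_reachable_delete_edges_iff_exists_cycle
      (G := H) (v := c) (w := d2)).mpr ⟨u, _, hcyc, hmemcyc⟩
  have hRcd : T'.Reachable c d2 := hkey.2
  have hT'conn : T'.Connected := by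
    have : Nonempty V := hHconn.nonempty
    exact ⟨fun y z => reachable_patch hRcd (hHconn.preconnected y z)⟩
  -- acyclicity
  have hT'acyclic : T'.IsAcyclic := by
    intro v0 cyc hcyc'
    by_cases hf : s(u, x) ∈ cyc.edges
    · have h2 := (SimpleGraph.adj_and_reachable_delete_edges_iff_exists_cycle
        (G := T') (v := u) (w := x)).mpr ⟨v0, cyc, hcyc', hf⟩
      obtain ⟨q2⟩ := h2.2
      have h1 : ∀ e' ∈ (T' \ SimpleGraph.fromEdgeSet {s(u, x)}).edgeSet,
          e' ∈ T.edgeSet ∧ e' ≠ s(c, d2) := by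
        intro e' he'
        rw [SimpleGraph.edgeSet_sdiff, hT', SimpleGraph.edgeSet_deleteEdges, hH,
          SimpleGraph.edgeSet_sup, SimpleGraph.edgeSet_fromEdgeSet] at he'
        simp only [Set.mem_diff, Set.mem_union, Set.mem_singleton_iff,
          Set.mem_setOf_eq] at he'
        have hfd : ¬(s(u, x) : Sym2 V).IsDiag := by
          rw [Sym2.mk_isDiag_iff]; exact hux
        tauto
      have hq2T : ∀ e' ∈ q2.edges, e' ∈ T.edgeSet := fun e' he' =>
        (h1 e' (q2.edges_subset_edgeSet he')).1
      have hq3e : s(c, d2) ∉ (q2.transfer T hq2T).edges := by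
        rw [SimpleGraph.Walk.edges_transfer]
        intro hmem
        exact (h1 _ (q2.edges_subset_edgeSet hmem)).2 rfl
      have huniq := hT.IsAcyclic.path_unique ((q2.transfer T hq2T).toPath)
        ⟨p.reverse, hp.reverse⟩
      have hval : (((q2.transfer T hq2T).toPath : T.Path u x) : T.Walk u x)
          = p.reverse := congrArg Subtype.val huniq
      have hmem2 : s(c, d2) ∈ (((q2.transfer T hq2T).toPath : T.Path u x) :
          T.Walk u x).edges := by
        rw [hval, SimpleGraph.Walk.edges_reverse, List.mem_reverse]
        exact hep
      exact hq3e (SimpleGraph.Walk.edges_toPath_subset _ hmem2)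
    · have hcycT : ∀ e' ∈ cyc.edges, e' ∈ T.edgeSet := by
        intro e' he'
        have h0 := cyc.edges_subset_edgeSet he'
        rw [hT', SimpleGraph.edgeSet_deleteEdges, hH, SimpleGraph.edgeSet_sup,
          SimpleGraph.edgeSet_fromEdgeSet] at h0
        simp only [Set.mem_diff, Set.mem_union, Set.mem_singleton_iff,
          Set.mem_setOf_eq] at h0
        rcases h0.1 with h | h
        · exact h
        · exact absurd (h.1 ▸ he') hf
      exact hT.IsAcyclic (cyc.transfer T hcycT) (hcyc'.transfer hcycT)
  have hT'tree : T'.IsTree := ⟨hT'conn, hT'acyclic⟩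
  -- degree computations
  have hnbF : ∀ z : V, z ≠ u → z ≠ x → z ≠ c → z ≠ d2 →
      T'.neighborFinset z = T.neighborFinset z := by
    intro z h1 h2 h3 h4
    ext y
    rw [SimpleGraph.mem_neighborFinset, SimpleGraph.mem_neighborFinset, hadj']
    constructor
    · rintro (⟨hA, _⟩ | hfeq)
      · exact hA
      · exfalso
        rw [Sym2.eq_iff] at hfeq
        rcases hfeq with ⟨ha', _⟩ | ⟨ha', _⟩
        · exact h1 ha'
        · exact h2 ha'
    · intro hA
      refine Or.inl ⟨hA, ?_⟩
      intro hh
      rw [Sym2.eq_iff] at hh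
      rcases hh with ⟨ha', _⟩ | ⟨ha', _⟩
      · exact h3 ha'
      · exact h4 ha'
  have hnbC : T'.neighborFinset c = (T.neighborFinset c).erase d2 := by
    ext y
    rw [SimpleGraph.mem_neighborFinset, Finset.mem_erase,
      SimpleGraph.mem_neighborFinset, hadj']
    constructor
    · rintro (⟨hA, hne⟩ | hfeq)
      · exact ⟨fun h => hne (by rw [h]), hA⟩
      · exfalso
        rw [Sym2.eq_iff] at hfeq
        rcases hfeq with ⟨ha', _⟩ | ⟨ha', _⟩
        · exact huc' ha'.symm
        · exact hxc ha'.symm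
    · rintro ⟨hne, hA⟩
      refine Or.inl ⟨hA, ?_⟩
      intro h
      rw [Sym2.congr_right] at h
      exact hne h
  have hdC : T'.degree c = 1 := by
    show (T'.neighborFinset c).card = 1
    rw [hnbC, Finset.card_erase_of_mem ((SimpleGraph.mem_neighborFinset _ _ _).mpr hcd)]
    have h2 : (T.neighborFinset c).card = 2 := hdegc
    omega
  have hnbD : x ≠ d2 → T'.neighborFinset d2 = (T.neighborFinset d2).erase c := by
    intro hxd
    ext y
    rw [SimpleGraph.mem_neighborFinset, Finset.mem_erase,
      SimpleGraph.mem_neighborFinset, hadj']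
    constructor
    · rintro (⟨hA, hne⟩ | hfeq)
      · refine ⟨?_, hA⟩
        intro h
        apply hne
        rw [h]
        exact Sym2.eq_swap
      · exfalso
        rw [Sym2.eq_iff] at hfeq
        rcases hfeq with ⟨ha', _⟩ | ⟨ha', _⟩
        · exact hud ha'.symm
        · exact hxd ha'.symm
    · rintro ⟨hne, hA⟩
      refine Or.inl ⟨hA, ?_⟩
      intro h
      rw [Sym2.eq_iff] at h
      rcases h with ⟨ha', hb'⟩ | ⟨_, hb'⟩
      · exact hcd' ha'.symm
      · exact hne hb'
  have hdD : x ≠ d2 → T'.degree d2 = 1 := by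
    intro hxd
    show (T'.neighborFinset d2).card = 1
    rw [hnbD hxd, Finset.card_erase_of_mem
      ((SimpleGraph.mem_neighborFinset _ _ _).mpr hcd.symm)]
    have h2 : (T.neighborFinset d2).card = 2 := hdegd
    omega
  have hxnotnbu : x ∉ T.neighborFinset u := by
    intro h
    exact hnotT ((SimpleGraph.mem_edgeSet T).mpr
      ((SimpleGraph.mem_neighborFinset _ _ _).mp h))
  have hnbU : T'.neighborFinset u = insert x (T.neighborFinset u) := by
    ext y
    rw [SimpleGraph.mem_neighborFinset, Finset.mem_insert,
      SimpleGraph.mem_neighborFinset, hadj']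
    constructor
    · rintro (⟨hA, _⟩ | hfeq)
      · exact Or.inr hA
      · rw [Sym2.congr_right] at hfeq
        exact Or.inl hfeq
    · rintro (rfl | hA)
      · exact Or.inr rfl
      · refine Or.inl ⟨hA, ?_⟩
        intro hh
        rw [Sym2.eq_iff] at hh
        rcases hh with ⟨ha', _⟩ | ⟨ha', _⟩
        · exact huc' ha'
        · exact hud ha'
  have hdU : T'.degree u = 3 := by
    show (T'.neighborFinset u).card = 3
    rw [hnbU, Finset.card_insert_of_notMem hxnotnbu]
    have h2 : (T.neighborFinset u).card = 2 := hdegu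
    omega
  have hunotnbx : u ∉ T.neighborFinset x := by
    intro h
    exact hnotT ((SimpleGraph.mem_edgeSet T).mpr
      ((SimpleGraph.mem_neighborFinset _ _ _).mp h).symm)
  have hnbX : x ≠ d2 → T'.neighborFinset x = insert u (T.neighborFinset x) := by
    intro hxd
    ext y
    rw [SimpleGraph.mem_neighborFinset, Finset.mem_insert,
      SimpleGraph.mem_neighborFinset, hadj']
    constructor
    · rintro (⟨hA, _⟩ | hfeq)
      · exact Or.inr hA
      · rw [Sym2.eq_iff] at hfeq
        rcases hfeq with ⟨ha', _⟩ | ⟨_, hb'⟩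
        · exact absurd ha' (Ne.symm hux)
        · exact Or.inl hb'
    · rintro (rfl | hA)
      · refine Or.inr ?_
        exact Sym2.eq_swap
      · refine Or.inl ⟨hA, ?_⟩
        intro hh
        rw [Sym2.eq_iff] at hh
        rcases hh with ⟨ha', _⟩ | ⟨ha', _⟩
        · exact hxc ha'
        · exact hxd ha'
  have hdX : x ≠ d2 → T'.degree x = T.degree x + 1 := by
    intro hxd
    show (T'.neighborFinset x).card = (T.neighborFinset x).card + 1
    rw [hnbX hxd, Finset.card_insert_of_notMem hunotnbx]
  have hxdegpos : 0 < T.degree x := by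
    obtain ⟨y1, hy1, _, _⟩ := SimpleGraph.Walk.exists_eq_cons_of_ne
      (show x ≠ u from fun h => hux h.symm) p
    exact (SimpleGraph.degree_pos_iff_exists_adj _ _).mpr ⟨y1, hy1⟩
  have hLsub : ∀ z : V, T.degree z = 1 → z ≠ x → T'.degree z = 1 := by
    intro z h1 hzx
    have hzu : z ≠ u := fun h => by rw [h, hdegu] at h1; omega
    have hzc : z ≠ c := fun h => by rw [h, hdegc] at h1; omega
    have hzd : z ≠ d2 := fun h => by rw [h, hdegd] at h1; omega
    show (T'.neighborFinset z).card = 1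
    rw [hnbF z hzu hzx hzc hzd]
    exact h1
  -- leaf counting
  have hcount : (Finset.univ.filter fun z : V => T.degree z = 1).card + 1 ≤
      (Finset.univ.filter fun z : V => T'.degree z = 1).card := by
    by_cases hxd : x = d2
    · have hsubL : insert c (Finset.univ.filter fun z : V => T.degree z = 1) ⊆
          Finset.univ.filter fun z : V => T'.degree z = 1 := by
        intro z hz
        rw [Finset.mem_insert] at hz
        rw [Finset.mem_filter]
        refine ⟨Finset.mem_univ _, ?_⟩
        rcases hz with rfl | hz
        · exact hdC
        · rw [Finset.mem_filter] at hz
          refine hLsub z hz.2 ?_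
          intro h
          have hz2 := hz.2
          rw [h, hxd, hdegd] at hz2
          omega
      have hcnot : c ∉ (Finset.univ.filter fun z : V => T.degree z = 1) := by
        rw [Finset.mem_filter]
        rintro ⟨_, h⟩
        rw [hdegc] at h
        omega
      have := Finset.card_le_card hsubL
      rw [Finset.card_insert_of_notMem hcnot] at this
      omega
    · have hsubL : insert c (insert d2
          ((Finset.univ.filter fun z : V => T.degree z = 1).erase x)) ⊆
          Finset.univ.filter fun z : V => T'.degree z = 1 := by
        intro z hz
        rw [Finset.mem_insert, Finset.mem_insert, Finset.mem_erase] at hz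
        rw [Finset.mem_filter]
        refine ⟨Finset.mem_univ _, ?_⟩
        rcases hz with rfl | rfl | ⟨hzx, hz⟩
        · exact hdC
        · exact hdD hxd
        · rw [Finset.mem_filter] at hz
          exact hLsub z hz.2 hzx
      have hc1 : c ∉ insert d2
          ((Finset.univ.filter fun z : V => T.degree z = 1).erase x) := by
        rw [Finset.mem_insert, Finset.mem_erase, Finset.mem_filter]
        rintro (h | ⟨_, _, h⟩)
        · exact hcd' h
        · rw [hdegc] at h; omega
      have hd1 : d2 ∉ (Finset.univ.filter fun z : V => T.degree z = 1).erase x := by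
        rw [Finset.mem_erase, Finset.mem_filter]
        rintro ⟨_, _, h⟩
        rw [hdegd] at h; omega
      have hcard := Finset.card_le_card hsubL
      rw [Finset.card_insert_of_notMem hc1, Finset.card_insert_of_notMem hd1] at hcard
      have herase := Finset.pred_card_le_card_erase
        (s := Finset.univ.filter fun z : V => T.degree z = 1) (a := x)
      omega
  refine ⟨T', hle, hT'tree, hcount, ?_⟩
  intro z h1 h2
  by_contra hcon
  push_neg at hcon
  obtain ⟨hzc, hzd⟩ := hcon
  by_cases hzu : z = u
  · rw [hzu, hdU] at h1; omega
  · by_cases hzx : z = x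
    · subst hzx
      have hxd : z ≠ d2 := hzd
      rw [hdX hxd] at h1
      omega
    · rw [show T'.degree z = (T'.neighborFinset z).card from rfl,
        hnbF z hzu hzx hzc hzd] at h1
      exact h2 h1

end StmtAux

open scoped Classical in
/-- If a spanning tree T of G with s leaves has a degree-2-path P = (v₀, ..., v_d), d ≥ 7,
and some strictly internal vertex v_i (3 ≤ i ≤ d - 3) has a G-neighbor x with v_i x not an
edge of T, then G has a spanning tree with at least s + 1 leaves all of whose new leaves
are internal vertices of P. -/
theorem stmt19 {V : Type*} [Fintype V] (G T : SimpleGraph V) (hG : G.Connected)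
    (hsub : T ≤ G) (hT : T.IsTree) (s : ℕ)
    (hs : (Finset.univ.filter fun z : V => T.degree z = 1).card = s)
    (a b : V) (w : T.Walk a b) (hw : w.IsPath) (hd : 7 ≤ w.length)
    (hdeg : ∀ u ∈ w.support, u ≠ a → u ≠ b → T.degree u = 2)
    (i : ℕ) (hi1 : 3 ≤ i) (hi2 : i ≤ w.length - 3)
    (x : V) (hadj : G.Adj (w.getVert i) x) (hnotT : s(w.getVert i, x) ∉ T.edgeSet) :
    ∃ T' : SimpleGraph V, T' ≤ G ∧ T'.IsTree ∧
      s + 1 ≤ (Finset.univ.filter fun z : V => T'.degree z = 1).card ∧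
      ∀ z : V, T'.degree z = 1 → T.degree z ≠ 1 →
        z ∈ w.support ∧ z ≠ a ∧ z ≠ b := by
  obtain ⟨m, rfl⟩ : ∃ m, i = m + 3 := ⟨i - 3, by omega⟩
  have hm6 : m + 6 ≤ w.length := by omega
  have hinj := StmtAux.getVert_inj w hw
  have hmem : ∀ j : ℕ, w.getVert j ∈ w.support := StmtAux.getVert_mem_support w
  have hne_ab : ∀ j, 0 < j → j < w.length → w.getVert j ≠ a ∧ w.getVert j ≠ b := by
    intro j h1 h2
    constructor
    · intro h
      have := hinj j 0 (by omega) (by omega)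
        (by rw [h, SimpleGraph.Walk.getVert_zero])
      omega
    · intro h
      have := hinj j w.length (by omega) le_rfl
        (by rw [h, SimpleGraph.Walk.getVert_length])
      omega
  have hdeg2 : ∀ j, 0 < j → j < w.length → T.degree (w.getVert j) = 2 := fun j h1 h2 =>
    hdeg _ (hmem j) (hne_ab j h1 h2).1 (hne_ab j h1 h2).2
  have hadjj : ∀ j, j < w.length → T.Adj (w.getVert j) (w.getVert (j + 1)) := fun j hj =>
    w.adj_getVert_succ hj
  have hvne : ∀ j k, j ≤ w.length → k ≤ w.length → j ≠ k →
      w.getVert j ≠ w.getVert k := fun j k hj hk hjk h => hjk (hinj j k hj hk h)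
  obtain ⟨p0⟩ := hT.isConnected.preconnected x (w.getVert (m + 3))
  obtain ⟨p, hp⟩ := p0.toPath
  have main : ∀ (c d2 : V) (q'' : T.Walk c x), w.getVert (m + 3) ∉ q''.support →
      (∀ e ∈ q''.edges, e ∈ p.edges) →
      T.Adj (w.getVert (m + 3)) c → T.Adj c d2 → w.getVert (m + 3) ≠ d2 →
      T.degree c = 2 → T.degree d2 = 2 →
      c ∈ w.support → c ≠ a → c ≠ b → d2 ∈ w.support → d2 ≠ a → d2 ≠ b →
      (∃ T' : SimpleGraph V, T' ≤ G ∧ T'.IsTree ∧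
        s + 1 ≤ (Finset.univ.filter fun z : V => T'.degree z = 1).card ∧
        ∀ z : V, T'.degree z = 1 → T.degree z ≠ 1 →
          z ∈ w.support ∧ z ≠ a ∧ z ≠ b) := by
    intro c d2 q'' hnotin hsubE huc hcd hud hdegc hdegd hcs hca hcb hds hda hdb
    have hcx : c ≠ x := fun h =>
      hnotT (by rw [← h]; exact (SimpleGraph.mem_edgeSet T).mpr huc)
    have hnb : ∀ y, T.Adj c y → y = w.getVert (m + 3) ∨ y = d2 := fun y hy =>
      StmtAux.nb_two huc.symm hcd hud hdegc hy
    have hedge := StmtAux.second_step q'' hcx hnotin hnb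
    have hep : s(c, d2) ∈ p.edges := hsubE _ hedge
    obtain ⟨T', h1, h2, h3, h4⟩ := StmtAux.aux G T hsub hT (w.getVert (m + 3)) x c d2
      hadj hnotT huc hcd hud (hdeg2 (m + 3) (by omega) (by omega)) hdegc hdegd p hp hep
    refine ⟨T', h1, h2, by rw [← hs]; exact h3, ?_⟩
    intro z hz1 hz2
    rcases h4 z hz1 hz2 with rfl | rfl
    exacts [⟨hcs, hca, hcb⟩, ⟨hds, hda, hdb⟩]
  have hqpath : p.reverse.IsPath := hp.reverse
  obtain ⟨y1, hadj1, q', hq_eq⟩ := SimpleGraph.Walk.exists_eq_cons_of_ne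
    (show w.getVert (m + 3) ≠ x from hadj.ne) p.reverse
  rw [hq_eq, SimpleGraph.Walk.cons_isPath_iff] at hqpath
  have hsubE : ∀ e ∈ q'.edges, e ∈ p.edges := by
    intro e he
    have h0 : e ∈ p.reverse.edges := by
      rw [hq_eq, SimpleGraph.Walk.edges_cons]
      exact List.mem_cons_of_mem _ he
    rwa [SimpleGraph.Walk.edges_reverse, List.mem_reverse] at h0
  have hy1 := StmtAux.nb_two ((hadjj (m + 2) (by omega)).symm)
    (hadjj (m + 3) (by omega)) (hvne (m + 2) (m + 4) (by omega) (by omega) (by omega))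
    (hdeg2 (m + 3) (by omega) (by omega)) hadj1
  rcases hy1 with rfl | rfl
  · exact main (w.getVert (m + 2)) (w.getVert (m + 1)) q' hqpath.2 hsubE
      ((hadjj (m + 2) (by omega)).symm) ((hadjj (m + 1) (by omega)).symm)
      (hvne (m + 3) (m + 1) (by omega) (by omega) (by omega))
      (hdeg2 (m + 2) (by omega) (by omega)) (hdeg2 (m + 1) (by omega) (by omega))
      (hmem _) (hne_ab (m + 2) (by omega) (by omega)).1
      (hne_ab (m + 2) (by omega) (by omega)).2
      (hmem _) (hne_ab (m + 1) (by omega) (by omega)).1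
      (hne_ab (m + 1) (by omega) (by omega)).2
  · exact main (w.getVert (m + 4)) (w.getVert (m + 5)) q' hqpath.2 hsubE
      (hadjj (m + 3) (by omega)) (hadjj (m + 4) (by omega))
      (hvne (m + 3) (m + 5) (by omega) (by omega) (by omega))
      (hdeg2 (m + 4) (by omega) (by omega)) (hdeg2 (m + 5) (by omega) (by omega))
      (hmem _) (hne_ab (m + 4) (by omega) (by omega)).1
      (hne_ab (m + 4) (by omega) (by omega)).2
      (hmem _) (hne_ab (m + 5) (by omega) (by omega)).1
      (hne_ab (m + 5) (by omega) (by omega)).2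
end
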